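/- Let f : ℝ^d → ℝ be twice continuously differentiable with a global minimizer x*, let γ > 0 and c > 0, and suppose there exist constants a > 0 and b > 0 such that for all x ∈ ℝ^d, a·(f(x) − f(x*)) + b·‖x − x*‖² ≤ ⟨x − x*, ∇f(x) − ∇f(x*)⟩. Then for any initial condition (x₀, p₀) ∈ ℝ^d × ℝ^d and any solution (x(t), p(t)) of the CD dynamics on [0, ∞) with this initial condition, there exist κ > 0 and C ≥ 0 such that for all t ≥ 0, f(x(t)) − f(x*) + ‖p(t)‖ ≤ C·e^{−κt}. -/

import Mathlib

open RealInnerProductSpace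

/-- Componentwise cube of a vector in `ℝ^d`. -/
noncomputable def cwCube {d : ℕ} (a : EuclideanSpace ℝ (Fin d)) :
    EuclideanSpace ℝ (Fin d) := WithLp.toLp 2 (fun i : Fin d => a i ^ 3)

lemma inner_cwCube_self_nonneg {d : ℕ} (v : EuclideanSpace ℝ (Fin d)) :
    0 ≤ ⟪v, cwCube v⟫ := by
  rw [PiLp.inner_apply]
  refine Finset.sum_nonneg fun i _ => ?_
  simp only [RCLike.inner_apply, conj_trivial, cwCube, PiLp.toLp_apply]
  nlinarith [sq_nonneg (v i), sq_nonneg (v i ^ 2)]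

lemma norm_cwCube_le {d : ℕ} (v : EuclideanSpace ℝ (Fin d)) :
    ‖cwCube v‖ ≤ ‖v‖ ^ 3 := by
  refine le_of_pow_le_pow_left₀ two_ne_zero (by positivity) ?_
  rw [← real_inner_self_eq_norm_sq]
  have hv2 : ‖v‖ ^ 2 = ∑ i, v i ^ 2 := by
    rw [← real_inner_self_eq_norm_sq, PiLp.inner_apply]
    simp [RCLike.inner_apply, sq]
  rw [PiLp.inner_apply]
  simp only [RCLike.inner_apply, conj_trivial, cwCube, PiLp.toLp_apply]
  have hS : ∀ i, v i ^ 2 ≤ ∑ j, v j ^ 2 := fun i =>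
    Finset.single_le_sum (f := fun j => v j ^ 2) (fun j _ => sq_nonneg _) (Finset.mem_univ i)
  calc ∑ i, v i ^ 3 * v i ^ 3 = ∑ i, (v i ^ 2) * (v i ^ 2) ^ 2 := by
        refine Finset.sum_congr rfl fun i _ => by ring
    _ ≤ ∑ i, (v i ^ 2) * (∑ j, v j ^ 2) ^ 2 := by
        refine Finset.sum_le_sum fun i _ => ?_
        exact mul_le_mul_of_nonneg_left (pow_le_pow_left₀ (sq_nonneg _) (hS i) 2) (sq_nonneg _)
    _ = (∑ j, v j ^ 2) ^ 3 := by rw [← Finset.sum_mul]; ring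
    _ = (‖v‖ ^ 3) ^ 2 := by rw [show (‖v‖ ^ 3) ^ 2 = (‖v‖ ^ 2) ^ 3 by ring, hv2]

lemma decay_aux {V V' : ℝ → ℝ} {κ : ℝ} (hV : ∀ t, 0 ≤ t → HasDerivAt V (V' t) t)
    (hle : ∀ t, 0 ≤ t → V' t + κ * V t ≤ 0) :
    ∀ t, 0 ≤ t → V t ≤ V 0 * Real.exp (-κ * t) := by
  set G := fun t => V t * Real.exp (κ * t) with hGdef
  have hG : ∀ t, 0 ≤ t → HasDerivAt G ((V' t + κ * V t) * Real.exp (κ * t)) t := by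
    intro t ht
    have h1 : HasDerivAt (fun s : ℝ => Real.exp (κ * s)) (Real.exp (κ * t) * κ) t :=
      (Real.hasDerivAt_exp (κ * t)).comp t ((hasDerivAt_id t).const_mul κ) |>.congr_deriv (by ring)
    have : HasDerivAt (fun s => V s * Real.exp (κ * s)) _ t := (hV t ht).mul h1
    convert this using 1
    ring
  have anti : AntitoneOn G (Set.Ici 0) := by
    refine antitoneOn_of_hasDerivWithinAt_nonpos
      (f' := fun t => (V' t + κ * V t) * Real.exp (κ * t)) (convex_Ici 0) ?_ ?_ ?_
    · intro t ht
      exact ((hG t ht).continuousAt).continuousWithinAt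
    · intro t ht
      rw [interior_Ici] at ht
      exact ((hG t ht.le).hasDerivWithinAt)
    · intro t ht
      rw [interior_Ici] at ht
      exact mul_nonpos_of_nonpos_of_nonneg (hle t ht.le) (Real.exp_nonneg _)
  intro t ht
  have h2 : G t ≤ G 0 := anti (Set.self_mem_Ici) ht ht
  have h3 : G 0 = V 0 := by simp [hGdef]
  have h4 : V t = G t * Real.exp (-κ * t) := by
    simp only [hGdef, mul_assoc, ← Real.exp_add]
    ring_nf
    simp
  rw [h4]
  exact mul_le_mul_of_nonneg_right (h3 ▸ h2) (Real.exp_nonneg _)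

lemma young_aux {b : ℝ} (hb : 0 < b) (x y : ℝ) : x*y ≤ (b/4)*x^2 + (1/b)*y^2 := by
  have key : (b/4)*x^2 + (1/b)*y^2 - x*y = (b*x - 2*y)^2/(4*b) := by
    field_simp
    ring
  linarith [div_nonneg (sq_nonneg (b*x - 2*y)) (by linarith : (0:ℝ) ≤ 4*b), key.ge, key.le]

set_option maxHeartbeats 800000 in
lemma scalar_main (F P A W G Q R M ε κ γ a b c : ℝ)
    (hF : 0 ≤ F) (hP : 0 ≤ P) (hA : 0 ≤ A) (hW : |W| ≤ A*P) (hG : a*F + b*A^2 ≤ G)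
    (hQ : 0 ≤ Q) (hR : |R| ≤ A*P^3) (hPM : P ≤ M) (hM : 0 ≤ M)
    (hγ : 0 < γ) (ha : 0 < a) (hb : 0 < b) (hc : 0 < c)
    (hε0 : 0 < ε) (hε1 : ε ≤ 1/2) (hεD : ε*(1+1/b+c^2*M^4/b) ≤ γ/2)
    (hκ0 : 0 < κ) (hκ1 : κ ≤ ε*a) (hκ2 : κ ≤ γ/2) (hκ3 : κ*(γ+2) ≤ b) :
    (-(γ*P^2) - c*Q + ε*(P^2 - G - c*R + W)) +
      κ*(F + P^2/2 + ε*W + (ε*(γ+1)/2)*A^2) ≤ 0 := by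
  obtain ⟨hW1, hW2⟩ := abs_le.1 hW
  obtain ⟨hR1, hR2⟩ := abs_le.1 hR
  have hPM2 : P^2 ≤ M^2 := by nlinarith
  have hAP3 : A*P^3 ≤ A*P*M^2 := by nlinarith [mul_nonneg hA hP]
  have hy1 : A*(c*M^2*P) ≤ (b/4)*A^2 + (1/b)*(c*M^2*P)^2 := young_aux hb A (c*M^2*P)
  have hy2 : A*P ≤ (b/4)*A^2 + (1/b)*P^2 := young_aux hb A P
  have hy3 : W ≤ (1/2)*A^2 + (1/2)*P^2 := by nlinarith [sq_nonneg (A - P)]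
  have h1 : -R ≤ A*P^3 := by linarith
  have h2 : c*(-R) ≤ c*(A*P*M^2) := mul_le_mul_of_nonneg_left (h1.trans hAP3) hc.le
  have e1 : c * (A * P * M ^ 2) = A * (c * M ^ 2 * P) := by ring
  have e2 : 1 / b * (c * M ^ 2 * P) ^ 2 = c ^ 2 * M ^ 4 / b * P ^ 2 := by ring
  rw [e1] at h2
  rw [e2] at hy1
  have hinner : P^2 - G - c*R + W ≤
      -(a*F) - (b/2)*A^2 + (1 + 1/b + c^2*M^4/b)*P^2 := by
    linarith [hy1, hy2, h2, hG, hW2]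
  have hmul := mul_le_mul_of_nonneg_left hinner hε0.le
  have hεDP : ε*(1+1/b+c^2*M^4/b)*P^2 ≤ (γ/2)*P^2 :=
    mul_le_mul_of_nonneg_right hεD (sq_nonneg P)
  have hstep1 : -(γ*P^2) - c*Q + ε*(P^2 - G - c*R + W) ≤
      -(ε*a*F) - (ε*b/2)*A^2 - (γ/2)*P^2 := by
    linarith [hmul, hεDP, mul_nonneg hc.le hQ]
  have hεW := mul_le_mul_of_nonneg_left hy3 hε0.le
  have hub : F + P^2/2 + ε*W + (ε*(γ+1)/2)*A^2 ≤
      F + ((1+ε)/2)*P^2 + (ε*(γ+2)/2)*A^2 := by linarith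
  have h4 := mul_le_mul_of_nonneg_left hub hκ0.le
  have h5 : κ*F ≤ ε*a*F := mul_le_mul_of_nonneg_right hκ1 hF
  have hκε : κ*ε ≤ γ/4 := by
    have h := mul_le_mul hκ2 hε1 hε0.le (by linarith : (0:ℝ) ≤ γ/2)
    linarith
  have h6' : κ*((1+ε)/2) ≤ γ/2 := by linarith
  have h6 := mul_le_mul_of_nonneg_right h6' (sq_nonneg P)
  have h7' := mul_le_mul_of_nonneg_left hκ3 (half_pos hε0).le
  have h7 := mul_le_mul_of_nonneg_right h7' (sq_nonneg A)
  have hstep2 : κ*(F + P^2/2 + ε*W + (ε*(γ+1)/2)*A^2) ≤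
      ε*a*F + (γ/2)*P^2 + (ε*b/2)*A^2 := by
    linarith [h4, h5, h6, h7]
  linarith

lemma scalar_lower (F P A W γ ε : ℝ) (hF : 0 ≤ F) (hW : |W| ≤ A*P)
    (hγ : 0 < γ) (hε0 : 0 < ε) (hε1 : ε ≤ 1/2) :
    F + (1/4)*P^2 ≤ F + (1/2)*P^2 + ε*W + (ε*(γ+1)/2)*A^2 := by
  obtain ⟨hW1, _⟩ := abs_le.1 hW
  have hnW : -W ≤ (1/2)*A^2 + (1/2)*P^2 := by nlinarith [sq_nonneg (A-P)]
  have h := mul_le_mul_of_nonneg_left hnW hε0.le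
  have h2 : 0 ≤ (1/4 - ε/2)*P^2 := mul_nonneg (by linarith) (sq_nonneg P)
  have h3 : 0 ≤ (ε*γ/2)*A^2 := mul_nonneg (by positivity) (sq_nonneg A)
  linarith

set_option maxHeartbeats 1600000

/-- Exponential convergence of the continuous cubically damped momentum (CD)
dynamics `ẋ = p`, `ṗ = -∇f(x) - γp - c[p]³`. -/
theorem cd_continuous_exponential_convergence
    (d : ℕ) (f : EuclideanSpace ℝ (Fin d) → ℝ)
    (hf : ContDiff ℝ 2 f)
    (xstar : EuclideanSpace ℝ (Fin d)) (hmin : ∀ y, f xstar ≤ f y)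
    (γ c : ℝ) (hγ : 0 < γ) (hc : 0 < c)
    (a b : ℝ) (ha : 0 < a) (hb : 0 < b)
    (hconv : ∀ x : EuclideanSpace ℝ (Fin d),
      a * (f x - f xstar) + b * ‖x - xstar‖ ^ 2 ≤
        ⟪x - xstar, gradient f x - gradient f xstar⟫)
    (x p : ℝ → EuclideanSpace ℝ (Fin d))
    (hx : ∀ t, 0 ≤ t → HasDerivAt x (p t) t)
    (hp : ∀ t, 0 ≤ t → HasDerivAt p
      (-gradient f (x t) - γ • p t - c • cwCube (p t)) t) :
    ∃ κ : ℝ, 0 < κ ∧ ∃ C : ℝ, 0 ≤ C ∧ ∀ t : ℝ, 0 ≤ t →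
      f (x t) - f xstar + ‖p t‖ ≤ C * Real.exp (-κ * t) := by
  have hdiff : Differentiable ℝ f := hf.differentiable (by norm_num)
  -- gradient vanishes at the minimizer
  have hg0 : gradient f xstar = 0 := by
    have h1 : fderiv ℝ f xstar = 0 :=
      IsLocalMin.fderiv_eq_zero (Filter.Eventually.of_forall fun y => hmin y)
    have h2 : gradient f xstar =
        (InnerProductSpace.toDual ℝ (EuclideanSpace ℝ (Fin d))).symm (fderiv ℝ f xstar) := rfl
    rw [h2, h1, map_zero]
  have hconv' : ∀ y, a * (f y - f xstar) + b * ‖y - xstar‖ ^ 2 ≤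
      ⟪y - xstar, gradient f y⟫ := by
    intro y
    have := hconv y
    rwa [hg0, sub_zero] at this
  have hF0 : ∀ t, 0 ≤ f (x t) - f xstar := fun t => sub_nonneg.2 (hmin _)
  -- chain rule for f ∘ x
  have hFd : ∀ t, 0 ≤ t → HasDerivAt (fun s => f (x s)) ⟪gradient f (x t), p t⟫ t := by
    intro t ht
    have h1 : HasFDerivAt f
        (InnerProductSpace.toDual ℝ (EuclideanSpace ℝ (Fin d)) (gradient f (x t))) (x t) :=
      ((hdiff (x t)).hasGradientAt).hasFDerivAt
    have h2 := h1.comp_hasDerivAt t (hx t ht)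
    simpa [Function.comp, InnerProductSpace.toDual_apply_apply] using
      (show HasDerivAt (fun s => f (x s))
        ((InnerProductSpace.toDual ℝ (EuclideanSpace ℝ (Fin d)) (gradient f (x t))) (p t)) t from h2)
  have hu : ∀ t, 0 ≤ t → HasDerivAt (fun s => x s - xstar) (p t) t :=
    fun t ht => (hx t ht).sub_const xstar
  -- expansion of inner products against the dynamics
  have hqv : ∀ (t : ℝ) (v : EuclideanSpace ℝ (Fin d)),
      ⟪v, -gradient f (x t) - γ • p t - c • cwCube (p t)⟫ =
      -⟪v, gradient f (x t)⟫ - γ * ⟪v, p t⟫ - c * ⟪v, cwCube (p t)⟫ := by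
    intro t v
    rw [inner_sub_right, inner_sub_right, inner_neg_right, real_inner_smul_right,
      real_inner_smul_right]
  -- a priori bound on ‖p‖ via the energy
  have hE0d : ∀ t, 0 ≤ t → HasDerivAt
      (fun s => (f (x s) - f xstar) + (1/2) * ⟪p s, p s⟫)
      (⟪gradient f (x t), p t⟫ + (1/2) *
        (⟪p t, -gradient f (x t) - γ • p t - c • cwCube (p t)⟫ +
         ⟪-gradient f (x t) - γ • p t - c • cwCube (p t), p t⟫)) t := fun t ht =>
    ((hFd t ht).sub_const (f xstar)).add (((hp t ht).inner ℝ (hp t ht)).const_mul (1/2))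
  have hE0le : ∀ t, 0 ≤ t →
      (⟪gradient f (x t), p t⟫ + (1/2) *
        (⟪p t, -gradient f (x t) - γ • p t - c • cwCube (p t)⟫ +
         ⟪-gradient f (x t) - γ • p t - c • cwCube (p t), p t⟫)) +
      0 * ((f (x t) - f xstar) + (1/2) * ⟪p t, p t⟫) ≤ 0 := by
    intro t ht
    rw [zero_mul, add_zero, real_inner_comm (p t)
      (-gradient f (x t) - γ • p t - c • cwCube (p t)), hqv t (p t),
      real_inner_comm (p t) (gradient f (x t))]
    have hQ := inner_cwCube_self_nonneg (p t)
    have hPP : (0:ℝ) ≤ ⟪p t, p t⟫ := real_inner_self_nonneg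
    linarith [mul_nonneg hγ.le hPP, mul_nonneg hc.le hQ]
  have hE0decay := decay_aux hE0d hE0le
  obtain ⟨M, hMdef⟩ : ∃ M : ℝ, M = Real.sqrt (2 * ((f (x 0) - f xstar) + (1/2) * ⟪p 0, p 0⟫)) :=
    ⟨_, rfl⟩
  have hE00 : 0 ≤ (f (x 0) - f xstar) + (1/2) * ⟪p 0, p 0⟫ :=
    add_nonneg (hF0 0) (mul_nonneg (by norm_num) real_inner_self_nonneg)
  have hM0 : 0 ≤ M := hMdef ▸ Real.sqrt_nonneg _
  have hPM : ∀ t, 0 ≤ t → ‖p t‖ ≤ M := by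
    intro t ht
    have h1 := hE0decay t ht
    rw [neg_zero, zero_mul, Real.exp_zero, mul_one] at h1
    have h2 : ‖p t‖ ^ 2 ≤ 2 * ((f (x 0) - f xstar) + (1/2) * ⟪p 0, p 0⟫) := by
      rw [← real_inner_self_eq_norm_sq]
      have := hF0 t
      linarith
    rw [hMdef]
    calc ‖p t‖ = Real.sqrt (‖p t‖ ^ 2) := (Real.sqrt_sq (norm_nonneg _)).symm
      _ ≤ _ := Real.sqrt_le_sqrt h2
  -- the constants
  have hD : 0 < 1 + 1/b + c^2*M^4/b := by positivity
  obtain ⟨ε, hεdef⟩ : ∃ ε : ℝ, ε = min (1/2) (γ/(2*(1 + 1/b + c^2*M^4/b))) := ⟨_, rfl⟩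
  have hε0 : 0 < ε := hεdef ▸ lt_min (by norm_num) (by positivity)
  have hε1 : ε ≤ 1/2 := hεdef ▸ min_le_left _ _
  have hεD : ε * (1 + 1/b + c^2*M^4/b) ≤ γ/2 := by
    have h : ε ≤ γ/(2*(1 + 1/b + c^2*M^4/b)) := hεdef ▸ min_le_right _ _
    calc ε * (1 + 1/b + c^2*M^4/b)
        ≤ (γ/(2*(1 + 1/b + c^2*M^4/b))) * (1 + 1/b + c^2*M^4/b) :=
          mul_le_mul_of_nonneg_right h hD.le
      _ = γ/2 := by
          field_simp
  obtain ⟨κ0, hκdef⟩ : ∃ κ0 : ℝ, κ0 = min (ε*a) (min (γ/2) (b/(γ+2))) := ⟨_, rfl⟩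
  have hκ0 : 0 < κ0 := hκdef ▸
    lt_min (mul_pos hε0 ha) (lt_min (half_pos hγ) (div_pos hb (by linarith)))
  have hκ1 : κ0 ≤ ε*a := hκdef ▸ min_le_left _ _
  have hκ2 : κ0 ≤ γ/2 := hκdef ▸ (min_le_right _ _).trans (min_le_left _ _)
  have hκ3 : κ0*(γ+2) ≤ b := by
    have h : κ0 ≤ b/(γ+2) := hκdef ▸ (min_le_right _ _).trans (min_le_right _ _)
    rw [← le_div_iff₀ (by positivity : (0:ℝ) < γ+2)]
    exact h
  -- the Lyapunov function
  obtain ⟨V, hVt⟩ : ∃ V : ℝ → ℝ, ∀ s,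
      V s = (f (x s) - f xstar) + (1/2) * ⟪p s, p s⟫ +
        ε * ⟪x s - xstar, p s⟫ + (ε*(γ+1)/2) * ⟪x s - xstar, x s - xstar⟫ :=
    ⟨_, fun s => rfl⟩
  obtain ⟨V', hV't⟩ : ∃ V' : ℝ → ℝ, ∀ t,
      V' t = (⟪gradient f (x t), p t⟫ + (1/2) *
          (⟪p t, -gradient f (x t) - γ • p t - c • cwCube (p t)⟫ +
           ⟪-gradient f (x t) - γ • p t - c • cwCube (p t), p t⟫)) +
        ε * (⟪x t - xstar, -gradient f (x t) - γ • p t - c • cwCube (p t)⟫ + ⟪p t, p t⟫) +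
        (ε*(γ+1)/2) * (⟪x t - xstar, p t⟫ + ⟪p t, x t - xstar⟫) :=
    ⟨_, fun t => rfl⟩
  have hVd : ∀ t, 0 ≤ t → HasDerivAt V (V' t) t := by
    intro t ht
    rw [funext hVt, hV't t]
    exact ((((hFd t ht).sub_const (f xstar)).add
        (((hp t ht).inner ℝ (hp t ht)).const_mul (1/2))).add
        (((hu t ht).inner ℝ (hp t ht)).const_mul ε)).add
        (((hu t ht).inner ℝ (hu t ht)).const_mul (ε*(γ+1)/2))
  have hVle : ∀ t, 0 ≤ t → V' t + κ0 * V t ≤ 0 := by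
    intro t ht
    have Hs := scalar_main (f (x t) - f xstar) ‖p t‖ ‖x t - xstar‖
      ⟪x t - xstar, p t⟫ ⟪x t - xstar, gradient f (x t)⟫
      ⟪p t, cwCube (p t)⟫ ⟪x t - xstar, cwCube (p t)⟫ M ε κ0 γ a b c
      (hF0 t) (norm_nonneg _) (norm_nonneg _) (abs_real_inner_le_norm _ _)
      (hconv' (x t)) (inner_cwCube_self_nonneg (p t))
      ((abs_real_inner_le_norm _ _).trans
        (mul_le_mul_of_nonneg_left (norm_cwCube_le (p t)) (norm_nonneg _)))
      (hPM t ht) hM0 hγ ha hb hc hε0 hε1 hεD hκ0 hκ1 hκ2 hκ3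
    rw [hV't t, hVt t]
    rw [real_inner_comm (p t) (-gradient f (x t) - γ • p t - c • cwCube (p t)),
      hqv t (p t), hqv t (x t - xstar),
      real_inner_comm (p t) (gradient f (x t)),
      real_inner_comm (x t - xstar) (p t)]
    simp only [real_inner_self_eq_norm_sq]
    linarith [Hs]
  have hVdecay := decay_aux hVd hVle
  have hVlow : ∀ t, (f (x t) - f xstar) + (1/4) * ‖p t‖ ^ 2 ≤ V t := by
    intro t
    have Hs := scalar_lower (f (x t) - f xstar) ‖p t‖ ‖x t - xstar‖
      ⟪x t - xstar, p t⟫ γ ε (hF0 t) (abs_real_inner_le_norm _ _) hγ hε0 hε1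
    rw [hVt t]
    simp only [real_inner_self_eq_norm_sq]
    linarith [Hs]
  have hV00 : 0 ≤ V 0 :=
    le_trans (add_nonneg (hF0 0) (by positivity)) (hVlow 0)
  refine ⟨κ0/2, by positivity, V 0 + 2 * Real.sqrt (V 0), by positivity, ?_⟩
  intro t ht
  have h1 := hVdecay t ht
  have hFle : f (x t) - f xstar ≤ V t := by
    have h := hVlow t
    nlinarith [sq_nonneg ‖p t‖]
  have hPle : ‖p t‖ ≤ 2 * Real.sqrt (V t) := by
    have h2 : ‖p t‖ ^ 2 ≤ 4 * V t := by
      have h3 := hVlow t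
      have h4 := hF0 t
      linarith
    calc ‖p t‖ = Real.sqrt (‖p t‖ ^ 2) := (Real.sqrt_sq (norm_nonneg _)).symm
      _ ≤ Real.sqrt (4 * V t) := Real.sqrt_le_sqrt h2
      _ = 2 * Real.sqrt (V t) := by
          rw [show (4:ℝ) * V t = 2^2 * V t by ring, Real.sqrt_mul (by positivity),
            Real.sqrt_sq (by norm_num)]
  have hVt0 : 0 ≤ V t := le_trans (add_nonneg (hF0 t) (by positivity)) (hVlow t)
  have hsq : Real.sqrt (V t) ≤ Real.sqrt (V 0) * Real.exp (-(κ0/2) * t) := by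
    calc Real.sqrt (V t) ≤ Real.sqrt (V 0 * Real.exp (-κ0 * t)) := Real.sqrt_le_sqrt h1
      _ = Real.sqrt (V 0) * Real.sqrt (Real.exp (-κ0 * t)) := Real.sqrt_mul hV00 _
      _ = Real.sqrt (V 0) * Real.exp ((-κ0 * t)/2) := by rw [← Real.exp_half]
      _ = Real.sqrt (V 0) * Real.exp (-(κ0/2) * t) := by ring_nf
  have hexp : Real.exp (-κ0 * t) ≤ Real.exp (-(κ0/2) * t) := by
    apply Real.exp_le_exp.2
    nlinarith [mul_nonneg hκ0.le ht]
  have hVte : V t ≤ V 0 * Real.exp (-(κ0/2) * t) :=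
    h1.trans (mul_le_mul_of_nonneg_left hexp hV00)
  calc f (x t) - f xstar + ‖p t‖ ≤ V t + 2 * Real.sqrt (V t) := by linarith
    _ ≤ V 0 * Real.exp (-(κ0/2) * t) + 2 * (Real.sqrt (V 0) * Real.exp (-(κ0/2) * t)) := by
        linarith [mul_le_mul_of_nonneg_left hsq (by norm_num : (0:ℝ) ≤ 2)]
    _ = (V 0 + 2 * Real.sqrt (V 0)) * Real.exp (-(κ0/2) * t) := by ring
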